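/- Let β, δ be real numbers with β > 1 and (δ+1)·ln β > 1, and let w, κ be real numbers with 1 < w ≤ κ. If κ - 1 ≤ (w - 1)·ln β, then (κ/w)·(1 - 1/w)^(κ-1) ≥ 1/β. -/

import Mathlib

theorem stmt_3 (β δ w κ : ℝ) (hβ : 1 < β) (hδβ : (δ + 1) * Real.log β > 1)
    (hw : 1 < w) (hwκ : w ≤ κ) (h : κ - 1 ≤ (w - 1) * Real.log β) :
    (κ / w) * (1 - 1 / w) ^ (κ - 1) ≥ 1 / β := by
  have hw0 : 0 < w := by linarith
  have hw1 : 0 < w - 1 := by linarith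
  have hbase : 0 < 1 - 1 / w := by
    have : 1 / w < 1 := by
      rw [div_lt_one hw0]; exact hw
    linarith
  have hκ1 : 0 ≤ κ - 1 := by linarith
  -- exp(1/(w-1)) ≥ w/(w-1)
  have hexp : w / (w - 1) ≤ Real.exp (1 / (w - 1)) := by
    have := Real.add_one_le_exp (1 / (w - 1))
    have : 1 / (w - 1) + 1 = w / (w - 1) := by field_simp; ring
    linarith [Real.add_one_le_exp (1 / (w - 1)), this]
  have hexp' : Real.exp (-(1 / (w - 1))) ≤ 1 - 1 / w := by
    rw [Real.exp_neg]
    have heq : 1 - 1 / w = (w / (w - 1))⁻¹ := by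
      field_simp
    rw [heq]
    apply inv_anti₀
    · positivity
    · exact hexp
  -- bound log
  have hlog : -(1 / (w - 1)) ≤ Real.log (1 - 1 / w) := by
    have := Real.log_le_log (by positivity) hexp'
    rwa [Real.log_exp] at this
  have hrpow : (1 - 1 / w) ^ (κ - 1) ≥ 1 / β := by
    rw [Real.rpow_def_of_pos hbase, mul_comm]
    have h1 : -Real.log β ≤ (κ - 1) * Real.log (1 - 1 / w) := by
      have h2 : (κ - 1) * (-(1 / (w - 1))) ≤ (κ - 1) * Real.log (1 - 1 / w) :=
        mul_le_mul_of_nonneg_left hlog hκ1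
      have h3 : -Real.log β ≤ (κ - 1) * (-(1 / (w - 1))) := by
        rw [mul_neg, neg_le_neg_iff]
        rw [mul_one_div, div_le_iff₀ hw1]
        linarith [h]
      linarith
    calc 1 / β = Real.exp (-Real.log β) := by
          rw [Real.exp_neg, Real.exp_log (by linarith), one_div]
      _ ≤ Real.exp ((κ - 1) * Real.log (1 - 1 / w)) := Real.exp_le_exp.mpr h1
  have hκw : 1 ≤ κ / w := (one_le_div hw0).mpr hwκ
  calc 1 / β ≤ (1 - 1 / w) ^ (κ - 1) := hrpow
    _ = 1 * (1 - 1 / w) ^ (κ - 1) := by ring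
    _ ≤ (κ / w) * (1 - 1 / w) ^ (κ - 1) := by
        apply mul_le_mul_of_nonneg_right hκw
        positivity
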